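/- Theorem 1 (characterization of the variant A³ of the q-Heun equation). Let a(x) = ∏_{n=1}^{3}(x − q^{h_n+1/2} t_n), c(x) = ∏_{n=1}^{3}(x − q^{l_n−1/2} t_n), and b(x) = b3 x³ + b2 x² + E x + b0 with b3, b2, b0, E ∈ ℂ, and denote by a2 and c2 the coefficients of x² in a(x) and c(x) respectively. Assume: (i) there exists a real number λ such that q^{−λ} a(0) + b0 + q^{λ} c(0) = 0 and q^{−λ−β} a(0) + b0 + q^{λ+β} c(0) = 0 (the exponents of the equation a(x)g(x/q) + b(x)g(x) + c(x)g(qx) = 0 at x = 0 differ by β); (ii) there exists a real number μ such that q^{μ} + b3 + q^{−μ} = 0 and q^{μ+1} + b3 + q^{−μ−1} = 0 (the exponents at x = ∞ differ by 1); (iii) for μ as in (ii), q^{μ} a2 + b2 + q^{−μ} c2 = 0 (the regular singularity x = ∞ is apparent). Then b3 = −(q^{1/2} + q^{−1/2}), b2 = Σ_{n=1}^{3} (q^{h_n} + q^{l_n}) t_n, and b0 = q^{(h1+h2+h3+l1+l2+l3)/2} (q^{β/2} + q^{−β/2}) t1 t2 t3; that is, the equation is the variant of the q-Heun equation (A³ −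 E)g = 0. -/

import Mathlib

noncomputable def qp (q r : ℝ) : ℂ := ((q ^ r : ℝ) : ℂ)

lemma rinj (q : ℝ) (hq : 0 < q) (hq1 : q ≠ 1) {x y : ℝ} (h : q ^ x = q ^ y) : x = y := by
  rw [Real.rpow_def_of_pos hq, Real.rpow_def_of_pos hq] at h
  exact mul_left_cancel₀ (Real.log_ne_zero_of_pos_of_ne_one hq hq1) (Real.exp_injective h)

lemma qp_mul (q : ℝ) (hq : 0 < q) (x y : ℝ) : qp q x * qp q y = qp q (x + y) := by
  unfold qp; rw [← Complex.ofReal_mul, ← Real.rpow_add hq]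

lemma qp_ne (q : ℝ) (hq : 0 < q) (x : ℝ) : qp q x ≠ 0 := by
  simp only [qp, ne_eq, Complex.ofReal_eq_zero]
  exact (Real.rpow_pos_of_pos hq x).ne'

lemma qp_zero (q : ℝ) : qp q 0 = 1 := by simp [qp]

lemma qp_one (q : ℝ) (hq : 0 < q) : qp q 1 = (q : ℂ) := by simp [qp]

lemma qp_neg (q : ℝ) (hq : 0 < q) (x : ℝ) : qp q (-x) = (qp q x)⁻¹ := by
  simp [qp, Real.rpow_neg hq.le]

lemma qp_inj (q : ℝ) (hq : 0 < q) (hq1 : q ≠ 1) {x y : ℝ} (h : qp q x = qp q y) : x = y :=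
  rinj q hq hq1 (Complex.ofReal_inj.mp h)

lemma qp_congr (q : ℝ) {x y : ℝ} (h : x = y) : qp q x = qp q y := by rw [h]

open Polynomial in
lemma coeff2 (r1 r2 r3 : ℂ) :
    ((X - C r1) * (X - C r2) * (X - C r3)).coeff 2 = -(r1 + r2 + r3) := by
  have h : (X - C r1) * (X - C r2) * (X - C r3)
      = X ^ 3 - C (r1 + r2 + r3) * X ^ 2 + C (r1*r2 + r1*r3 + r2*r3) * X - C (r1*r2*r3) := by
    simp only [C_add, C_mul]; ring
  rw [h]
  simp [coeff_X, coeff_one, add_mul, coeff_X_pow]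

open Polynomial in
theorem stmt9 (q h1 h2 h3 l1 l2 l3 β : ℝ) (hq : 0 < q) (hq1 : q ≠ 1) (hβ : β ≠ 0)
    (t1 t2 t3 : ℝ) (ht1 : t1 ≠ 0) (ht2 : t2 ≠ 0) (ht3 : t3 ≠ 0)
    (b3 b2 b0 E : ℂ) (a c : Polynomial ℂ)
    (ha : a = (X - C (qp q (h1 + 1/2) * (t1 : ℂ))) * (X - C (qp q (h2 + 1/2) * (t2 : ℂ)))
        * (X - C (qp q (h3 + 1/2) * (t3 : ℂ))))
    (hc : c = (X - C (qp q (l1 - 1/2) * (t1 : ℂ))) * (X - C (qp q (l2 - 1/2) * (t2 : ℂ)))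
        * (X - C (qp q (l3 - 1/2) * (t3 : ℂ))))
    (hzero : ∃ lam : ℝ,
        qp q (-lam) * a.eval 0 + b0 + qp q lam * c.eval 0 = 0 ∧
        qp q (-(lam + β)) * a.eval 0 + b0 + qp q (lam + β) * c.eval 0 = 0)
    (hinf : ∃ μ : ℝ,
        (qp q μ + b3 + qp q (-μ) = 0 ∧ qp q (μ + 1) + b3 + qp q (-(μ + 1)) = 0) ∧
        qp q μ * a.coeff 2 + b2 + qp q (-μ) * c.coeff 2 = 0) :
    b3 = -(qp q (1/2) + qp q (-(1/2))) ∧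
    b2 = (qp q h1 + qp q l1) * (t1 : ℂ) + (qp q h2 + qp q l2) * (t2 : ℂ)
        + (qp q h3 + qp q l3) * (t3 : ℂ) ∧
    b0 = qp q ((h1 + h2 + h3 + l1 + l2 + l3) / 2) * (qp q (β / 2) + qp q (-β / 2))
        * (t1 : ℂ) * (t2 : ℂ) * (t3 : ℂ) := by
  obtain ⟨lam, hz1, hz2⟩ := hzero
  obtain ⟨μ, ⟨hi1, hi2⟩, hi3⟩ := hinf
  -- Step 1: μ = -1/2
  have hcq : ((q : ℂ)) ≠ 1 := by exact_mod_cast hq1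
  have hqC0 : ((q : ℂ)) ≠ 0 := by exact_mod_cast hq.ne'
  have hu : qp q μ ≠ 0 := qp_ne q hq μ
  have s : qp q μ + (qp q μ)⁻¹ = qp q μ * q + (qp q μ * q)⁻¹ := by
    have e1 : qp q (μ + 1) = qp q μ * q := by rw [← qp_mul q hq, qp_one q hq]
    have e2 : qp q (-(μ + 1)) = (qp q μ * q)⁻¹ := by rw [qp_neg q hq, e1]
    have e3 : qp q (-μ) = (qp q μ)⁻¹ := qp_neg q hq μ
    linear_combination hi1 - hi2 - e3 + e1 + e2
  have key : (qp q μ * qp q μ * q - 1) * ((q : ℂ) - 1) = 0 := by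
    have h0 : qp q μ * ((qp q μ * qp q μ * (q:ℂ) - 1) * ((q:ℂ) - 1)) = 0 := by
      field_simp at s
      linear_combination -(qp q μ) * s
    rcases mul_eq_zero.mp h0 with h | h
    · exact absurd h hu
    · exact h
  have hμval : qp q μ * qp q μ * q = 1 := by
    rcases mul_eq_zero.mp key with h | h
    · exact sub_eq_zero.mp h
    · exact absurd (sub_eq_zero.mp h) hcq
  have hμ : μ = -(1/2) := by
    have : qp q (μ + μ + 1) = qp q 0 := by
      rw [qp_zero, ← qp_mul q hq, ← qp_mul q hq, qp_one q hq]; exact hμval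
    have := qp_inj q hq hq1 this
    linarith
  subst hμ
  -- Values of qp at ∓ 1/2 products
  have hhalf : ∀ x : ℝ, qp q (-(1/2)) * qp q (x + 1/2) = qp q x := by
    intro x; rw [qp_mul q hq]; exact qp_congr q (by ring)
  have hhalf' : ∀ x : ℝ, qp q (-(-(1/2))) * qp q (x - 1/2) = qp q x := by
    intro x; rw [qp_mul q hq]; exact qp_congr q (by ring)
  -- b3
  have hb3 : b3 = -(qp q (1/2) + qp q (-(1/2))) := by
    have : qp q (-(-(1/2))) = qp q (1/2) := qp_congr q (by norm_num)
    linear_combination hi1 - this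
  refine ⟨hb3, ?_, ?_⟩
  -- b2
  · have ha2 : a.coeff 2 = -(qp q (h1 + 1/2) * (t1:ℂ) + qp q (h2 + 1/2) * (t2:ℂ)
        + qp q (h3 + 1/2) * (t3:ℂ)) := by rw [ha, coeff2]
    have hc2 : c.coeff 2 = -(qp q (l1 - 1/2) * (t1:ℂ) + qp q (l2 - 1/2) * (t2:ℂ)
        + qp q (l3 - 1/2) * (t3:ℂ)) := by rw [hc, coeff2]
    rw [ha2, hc2] at hi3
    linear_combination hi3 + (t1:ℂ) * hhalf h1 + (t2:ℂ) * hhalf h2 + (t3:ℂ) * hhalf h3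
      + (t1:ℂ) * hhalf' l1 + (t2:ℂ) * hhalf' l2 + (t3:ℂ) * hhalf' l3
  -- b0
  · have hA : a.eval 0 = -(qp q (h1+h2+h3 + 3/2) * ((t1:ℂ) * t2 * t3)) := by
      rw [ha]
      simp only [eval_mul, eval_sub, eval_X, eval_C, zero_sub]
      rw [show (-(qp q (h1 + 1/2) * (t1:ℂ))) * -(qp q (h2 + 1/2) * (t2:ℂ))
          * -(qp q (h3 + 1/2) * (t3:ℂ))
        = -(qp q (h1+1/2) * qp q (h2+1/2) * qp q (h3+1/2) * ((t1:ℂ)*t2*t3)) by ring,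
        qp_mul q hq, qp_mul q hq]
      exact congrArg _ (congrArg (· * _) (qp_congr q (by ring)))
    have hC : c.eval 0 = -(qp q (l1+l2+l3 - 3/2) * ((t1:ℂ) * t2 * t3)) := by
      rw [hc]
      simp only [eval_mul, eval_sub, eval_X, eval_C, zero_sub]
      rw [show (-(qp q (l1 - 1/2) * (t1:ℂ))) * -(qp q (l2 - 1/2) * (t2:ℂ))
          * -(qp q (l3 - 1/2) * (t3:ℂ))
        = -(qp q (l1-1/2) * qp q (l2-1/2) * qp q (l3-1/2) * ((t1:ℂ)*t2*t3)) by ring,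
        qp_mul q hq, qp_mul q hq]
      exact congrArg _ (congrArg (· * _) (qp_congr q (by ring)))
    rw [hA, hC] at hz1 hz2
    set H := h1+h2+h3 with hH
    set L := l1+l2+l3 with hL
    set T : ℂ := (t1:ℂ) * t2 * t3 with hT
    have hT0 : T ≠ 0 := by
      simp only [hT, ne_eq, mul_eq_zero, Complex.ofReal_eq_zero]
      push_neg; exact ⟨⟨ht1, ht2⟩, ht3⟩
    -- subtract the two equations and cancel T
    have s2 : qp q (-lam + (H + 3/2)) + qp q (lam + (L - 3/2))
        = qp q (-lam + (H + 3/2)) * (qp q β)⁻¹ + qp q (lam + (L - 3/2)) * qp q β := by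
      have e1 : qp q (-lam) * qp q (H + 3/2) = qp q (-lam + (H+3/2)) := qp_mul q hq _ _
      have e2 : qp q lam * qp q (L - 3/2) = qp q (lam + (L-3/2)) := qp_mul q hq _ _
      have e3 : qp q (-(lam+β)) * qp q (H + 3/2)
          = qp q (-lam + (H+3/2)) * (qp q β)⁻¹ := by
        rw [← qp_neg q hq, qp_mul q hq, qp_mul q hq]; exact qp_congr q (by ring)
      have e4 : qp q (lam+β) * qp q (L - 3/2) = qp q (lam + (L-3/2)) * qp q β := by
        rw [qp_mul q hq, qp_mul q hq]; exact qp_congr q (by ring)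
      have hdiff : (qp q (-lam) * qp q (H+3/2) + qp q lam * qp q (L-3/2)) * T
          = (qp q (-(lam+β)) * qp q (H+3/2) + qp q (lam+β) * qp q (L-3/2)) * T := by
        linear_combination hz2 - hz1
      have := mul_right_cancel₀ hT0 hdiff
      rw [e1, e2, e3, e4] at this; exact this
    have hw1 : qp q β ≠ 1 := by
      intro h
      exact hβ (by simpa using qp_inj q hq hq1 (h.trans (qp_zero q).symm))
    have key2 : (qp q (-lam + (H + 3/2)) - qp q (lam + (L - 3/2)) * qp q β)
        * (qp q β - 1) = 0 := by
      have hw0 : qp q β ≠ 0 := qp_ne q hq β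
      have hw : (qp q β)⁻¹ * qp q β = 1 := inv_mul_cancel₀ hw0
      linear_combination (qp q β) * s2 + (qp q (-lam + (H + 3/2))) * hw
    have huv : qp q (-lam + (H + 3/2)) = qp q (lam + (L - 3/2) + β) := by
      rcases mul_eq_zero.mp key2 with h | h
      · rw [sub_eq_zero.mp h, qp_mul q hq]
      · exact absurd (sub_eq_zero.mp h) hw1
    have hlam : -lam + (H + 3/2) = lam + (L - 3/2) + β := qp_inj q hq hq1 huv
    -- now compute b0 from hz1
    have f1 : qp q ((H+L)/2) * qp q (β/2) = qp q (-lam + (H + 3/2)) := by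
      rw [qp_mul q hq]; exact qp_congr q (by linarith)
    have f2 : qp q ((H+L)/2) * qp q (-β/2) = qp q (lam + (L - 3/2)) := by
      rw [qp_mul q hq]; exact qp_congr q (by linarith)
    have e1 : qp q (-lam) * qp q (H + 3/2) = qp q (-lam + (H+3/2)) := qp_mul q hq _ _
    have e2 : qp q lam * qp q (L - 3/2) = qp q (lam + (L-3/2)) := qp_mul q hq _ _
    have hHL : (h1 + h2 + h3 + l1 + l2 + l3)/2 = (H+L)/2 := by rw [hH, hL]; ring
    rw [hHL]
    linear_combination hz1 - ((t1:ℂ)*t2*t3) * (f1 + f2 - e1 - e2)
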